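/- For all x, y, z > 0 and parameters β, μ_x, μ_y, μ_z, σ_x, σ_y, σ_z > 0, α ∈ (0,1), and a function φ : ℝ≥0 → ℝ≥0 with φ(x) ≤ 1 for all x, the expression L V = β y - φ(x)x - μ_x x - (β y)/x + φ(x) + μ_x + φ(x)x - μ_y y - y z - (φ(x)x)/y + μ_y + z + α z y - μ_z z - y + μ_z + σ_x²/2 + σ_y²/2 + σ_z²/2 satisfies L V ≤ c₁·V(x,y,z) + c₂, where V(x,y,z) = (x-1-ln x)+(y-1-ln y)+(z-1-ln z), c₁ = 2·max(1,β) and c₂ = 6·max(1,β) + (σ_x²+σ_y²+σ_z²)/2 + μ_x + μ_y + μ_z + 1. -/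
import Mathlib

lemma key_lin (t : ℝ) (ht : 0 < t) : t ≤ 2 * (t - 1 - Real.log t) + 2 := by
  have h1 := Real.log_le_sub_one_of_pos (show (0:ℝ) < t/2 by linarith)
  have h2 : Real.log (t/2) = Real.log t - Real.log 2 :=
    Real.log_div (ne_of_gt ht) two_ne_zero
  have h3 : Real.log 2 ≤ 1 := by
    have := Real.log_le_sub_one_of_pos (show (0:ℝ) < 2 by norm_num)
    linarith
  rw [h2] at h1
  linarith

theorem stmt_2 (β μx μy μz σx σy σz α : ℝ)
    (hβ : 0 < β) (hμx : 0 < μx) (hμy : 0 < μy) (hμz : 0 < μz)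
    (hσx : 0 < σx) (hσy : 0 < σy) (hσz : 0 < σz)
    (hα : α ∈ Set.Ioo (0 : ℝ) 1)
    (φ : ℝ → ℝ) (hφ0 : ∀ x, 0 ≤ φ x) (hφ1 : ∀ x, φ x ≤ 1)
    (x y z : ℝ) (hx : 0 < x) (hy : 0 < y) (hz : 0 < z) :
    β * y - φ x * x - μx * x - β * y / x + φ x + μx + φ x * x - μy * y - y * z
      - φ x * x / y + μy + z + α * z * y - μz * z - y + μz
      + σx ^ 2 / 2 + σy ^ 2 / 2 + σz ^ 2 / 2
    ≤ (2 * max 1 β) * ((x - 1 - Real.log x) + (y - 1 - Real.log y) + (z - 1 - Real.log z))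
      + (6 * max 1 β + (σx ^ 2 + σy ^ 2 + σz ^ 2) / 2 + μx + μy + μz + 1) := by
  obtain ⟨hα0, hα1⟩ := hα
  set M := max 1 β with hM
  have hM1 : 1 ≤ M := le_max_left _ _
  have hMβ : β ≤ M := le_max_right _ _
  have hVx : 0 ≤ x - 1 - Real.log x := by
    have := Real.log_le_sub_one_of_pos hx; linarith
  have hVy : y ≤ 2 * (y - 1 - Real.log y) + 2 := key_lin y hy
  have hVz : z ≤ 2 * (z - 1 - Real.log z) + 2 := key_lin z hz
  have hVy0 : 0 ≤ y - 1 - Real.log y := by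
    have := Real.log_le_sub_one_of_pos hy; linarith
  have hVz0 : 0 ≤ z - 1 - Real.log z := by
    have := Real.log_le_sub_one_of_pos hz; linarith
  have h1 : 0 ≤ β * y / x := by positivity
  have h2 : 0 ≤ φ x * x / y := by
    have := hφ0 x; positivity
  have h3 : (1 - α) * (y * z) ≥ 0 := by
    have : 0 ≤ (1 - α) := by linarith
    positivity
  have hβy : β * y ≤ M * (2 * (y - 1 - Real.log y) + 2) := by
    have h4 : β * y ≤ M * y := by nlinarith
    have h5 : M * y ≤ M * (2 * (y - 1 - Real.log y) + 2) := by nlinarith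
    linarith
  have hzM : z ≤ M * (2 * (z - 1 - Real.log z) + 2) := by nlinarith
  have hφx := hφ1 x
  nlinarith [hφ0 x, sq_nonneg σx, sq_nonneg σy, sq_nonneg σz,
    mul_pos hμx hx, mul_pos hμy hy, mul_pos hμz hz]
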